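/- Modus ponens for AGM robustness: for all x, y ∈ [−1, 1], if the implication value ▷(x, y) := ▽(−x, y) is strictly positive and x > 0, then y > 0. -/
import Mathlib

/-- AGM disjunction function. -/
noncomputable def agmOr (x y : ℝ) : ℝ :=
  if 0 < x ∨ 0 < y then (max x 0 + max y 0) / 2
  else 1 - Real.sqrt ((1 - x) * (1 - y))

/-- AGM implication. -/
noncomputable def agmImp (x y : ℝ) : ℝ := agmOr (-x) y

/-- Modus ponens for AGM robustness. -/
theorem agm_modus_ponens :
    ∀ x y : ℝ, x ∈ Set.Icc (-1 : ℝ) 1 → y ∈ Set.Icc (-1 : ℝ) 1 →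
      0 < agmImp x y → 0 < x → 0 < y := by
  intro x y hx hy himp hxpos
  by_contra hyneg
  push_neg at hyneg
  unfold agmImp agmOr at himp
  have hcond : ¬ (0 < -x ∨ 0 < y) := by
    push_neg
    exact ⟨by linarith, hyneg⟩
  rw [if_neg hcond] at himp
  have h1 : (1 : ℝ) ≤ (1 - -x) * (1 - y) := by nlinarith
  have h2 : (1 : ℝ) ≤ Real.sqrt ((1 - -x) * (1 - y)) := by
    calc (1:ℝ) = Real.sqrt 1 := by simp
      _ ≤ _ := Real.sqrt_le_sqrt h1
  linarith
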